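/- Let p ≡ 1 (mod 4) be prime and let G = (ℤ/pℤ)³. For any homomorphism φ : G → Aut(G) = GL₃(𝔽_p), the semidirect product G ⋉_φ G cannot be generated by fewer than 4 elements; more precisely, the Frattini quotient of G ⋉_φ G has 𝔽_p-dimension at least 4. -/

import Mathlib

open Multiplicative

namespace Stmt7Aux
variable {p : ℕ} [Fact p.Prime]

def lin (φ : Multiplicative (Fin 3 → ZMod p) →* MulAut (Multiplicative (Fin 3 → ZMod p)))
    (b : Multiplicative (Fin 3 → ZMod p)) :
    (Fin 3 → ZMod p) →ₗ[ZMod p] (Fin 3 → ZMod p) :=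
  AddMonoidHom.toZModLinearMap p
    { toFun := fun v => (φ b (ofAdd v)).toAdd
      map_zero' := by simp
      map_add' := fun v w => by simp [ofAdd_add] }

lemma lin_apply (φ : Multiplicative (Fin 3 → ZMod p) →* MulAut (Multiplicative (Fin 3 → ZMod p)))
    (b : Multiplicative (Fin 3 → ZMod p)) (v : Fin 3 → ZMod p) :
    lin φ b v = (φ b (ofAdd v)).toAdd := rfl

lemma lin_mul (φ : Multiplicative (Fin 3 → ZMod p) →* MulAut (Multiplicative (Fin 3 → ZMod p)))
    (b c : Multiplicative (Fin 3 → ZMod p)) :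
    lin φ (b * c) = (lin φ b) ∘ₗ (lin φ c) := by
  ext v; simp [lin_apply, map_mul]

lemma lin_one (φ : Multiplicative (Fin 3 → ZMod p) →* MulAut (Multiplicative (Fin 3 → ZMod p))) :
    lin φ 1 = LinearMap.id := by
  ext v; simp [lin_apply]

lemma exists_fixed_functional
    (φ : Multiplicative (Fin 3 → ZMod p) →* MulAut (Multiplicative (Fin 3 → ZMod p))) :
    ∃ ℓ : (Fin 3 → ZMod p) →ₗ[ZMod p] ZMod p, ℓ ≠ 0 ∧
      ∀ (b : Multiplicative (Fin 3 → ZMod p)) (v : Fin 3 → ZMod p),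
        ℓ ((φ b (ofAdd v)).toAdd) = ℓ v := by
  set Γ := Multiplicative (Fin 3 → ZMod p)
  set D := (Fin 3 → ZMod p) →ₗ[ZMod p] ZMod p
  letI : SMul Γ D := ⟨fun b ℓ => ℓ ∘ₗ lin φ b⁻¹⟩
  have smul_def : ∀ (b : Γ) (ℓ : D), b • ℓ = ℓ ∘ₗ lin φ b⁻¹ := fun _ _ => rfl
  letI : MulAction Γ D :=
    { one_smul := fun ℓ => by rw [smul_def, inv_one, lin_one]; rfl
      mul_smul := fun b c ℓ => by
        rw [smul_def, smul_def, smul_def, mul_inv_rev, lin_mul, ← LinearMap.comp_assoc] }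
  have e := LinearEquiv.piRing (ZMod p) (ZMod p) (Fin 3) (ZMod p)
  haveI : Finite D := Finite.of_equiv _ e.toEquiv.symm
  have hΓ : IsPGroup p Γ := by
    apply IsPGroup.of_card (n := 3)
    rw [Nat.card_eq_of_bijective (Multiplicative.toAdd (α := Fin 3 → ZMod p))
      (Equiv.bijective _), Nat.card_pi]
    simp [Nat.card_zmod]
  have hcard : Nat.card D = p ^ 3 := by
    rw [Nat.card_eq_of_bijective e (LinearEquiv.bijective e), Nat.card_pi]
    simp [Nat.card_zmod]
  have hmod := hΓ.card_modEq_card_fixedPoints D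
  rw [hcard] at hmod
  have hdvd : p ∣ Nat.card (MulAction.fixedPoints Γ D) :=
    (Nat.modEq_zero_iff_dvd.mp ((hmod.symm.trans (Nat.modEq_zero_iff_dvd.mpr ⟨p ^ 2, by ring⟩))))
  have h0 : (0 : D) ∈ MulAction.fixedPoints Γ D := fun b => by
    rw [smul_def]; exact LinearMap.zero_comp _
  haveI : Nonempty (MulAction.fixedPoints Γ D) := ⟨⟨0, h0⟩⟩
  have hpos : 0 < Nat.card (MulAction.fixedPoints Γ D) := Nat.card_pos
  have h2 : 2 ≤ Nat.card (MulAction.fixedPoints Γ D) :=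
    le_trans (Fact.out : p.Prime).two_le (Nat.le_of_dvd hpos hdvd)
  haveI : Nontrivial (MulAction.fixedPoints Γ D) := Finite.one_lt_card_iff_nontrivial.mp h2
  obtain ⟨⟨x, hx⟩, ⟨y, hy⟩, hxy⟩ := exists_pair_ne (MulAction.fixedPoints Γ D)
  have key : ∀ ℓ : D, ℓ ∈ MulAction.fixedPoints Γ D →
      ∀ (b : Γ) (v : Fin 3 → ZMod p), ℓ ((φ b (ofAdd v)).toAdd) = ℓ v := by
    intro ℓ hℓ b v
    have := hℓ b⁻¹
    rw [smul_def, inv_inv] at this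
    conv_rhs => rw [← this]
    rfl
  rcases eq_or_ne x 0 with h | h
  · refine ⟨y, ?_, key y hy⟩
    intro h'; exact hxy (by simp [h, h'])
  · exact ⟨x, h, key x hx⟩

lemma isCoatom_of_index_prime {G : Type*} [Group G] {H : Subgroup G} {q : ℕ} (hq : q.Prime)
    (h : H.index = q) : IsCoatom H := by
  constructor
  · intro htop
    rw [htop, Subgroup.index_top] at h
    exact hq.one_lt.ne' h.symm
  · intro J hJ
    have hle : H ≤ J := hJ.le
    have hmul := Subgroup.relIndex_mul_index hle
    rw [h] at hmul
    rcases hq.eq_one_or_self_of_dvd J.index ⟨H.relIndex J, by rw [← hmul, mul_comm]⟩ with h1 | h1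
    · exact Subgroup.index_eq_one.mp h1
    · rw [h1] at hmul
      have hone : H.relIndex J = 1 := by
        have : H.relIndex J * q = 1 * q := by rw [hmul, one_mul]
        exact Nat.eq_of_mul_eq_mul_right hq.pos this
      exact absurd (Subgroup.relIndex_eq_one.mp hone) hJ.not_ge

end Stmt7Aux

/-- Let `p ≡ 1 (mod 4)` be prime and `G = (ℤ/pℤ)³`. For any homomorphism
`φ : G → Aut(G)`, the semidirect product `G ⋊[φ] G` cannot be generated by fewer than
4 elements; more precisely, its Frattini quotient has `𝔽_p`-dimension at least 4
(equivalently, cardinality at least `p⁴`). -/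
theorem stmt_7 (p : ℕ) (hp : p.Prime) (hmod : p % 4 = 1)
    (φ : Multiplicative (Fin 3 → ZMod p) →* MulAut (Multiplicative (Fin 3 → ZMod p))) :
    (∀ S : Finset (Multiplicative (Fin 3 → ZMod p) ⋊[φ] Multiplicative (Fin 3 → ZMod p)),
        Subgroup.closure
          (S : Set (Multiplicative (Fin 3 → ZMod p) ⋊[φ] Multiplicative (Fin 3 → ZMod p))) = ⊤ →
          4 ≤ S.card) ∧
      p ^ 4 ≤ Nat.card
        ((Multiplicative (Fin 3 → ZMod p) ⋊[φ] Multiplicative (Fin 3 → ZMod p)) ⧸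
          frattini (Multiplicative (Fin 3 → ZMod p) ⋊[φ] Multiplicative (Fin 3 → ZMod p))) := by
  haveI := Fact.mk hp
  obtain ⟨ℓ, hℓ0, hfix⟩ := Stmt7Aux.exists_fixed_functional φ
  set K := Multiplicative (Fin 3 → ZMod p) ⋊[φ] Multiplicative (Fin 3 → ZMod p) with hKdef
  set M := ZMod p × (Fin 3 → ZMod p) with hMdef
  have hfixa : ∀ (b a : Multiplicative (Fin 3 → ZMod p)), ℓ ((φ b a).toAdd) = ℓ a.toAdd := by
    intro b a
    simpa using hfix b a.toAdd
  let f : K →* Multiplicative M :=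
    { toFun := fun x => ofAdd (ℓ x.left.toAdd, x.right.toAdd)
      map_one' := by simp; rfl
      map_mul' := fun x y => by
        have h1 : ℓ (toAdd (x * y).left) = ℓ (toAdd x.left) + ℓ (toAdd y.left) := by
          rw [SemidirectProduct.mul_left, toAdd_mul, map_add, hfixa]
        have h2 : toAdd (x * y).right = toAdd x.right + toAdd y.right := by
          rw [SemidirectProduct.mul_right, toAdd_mul]
        show ofAdd (ℓ (toAdd (x * y).left), toAdd (x * y).right) = _
        rw [h1, h2, ← ofAdd_add, Prod.mk_add_mk] }
  have hfs : Function.Surjective f := by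
    intro a
    obtain ⟨v₀, hv₀⟩ : ∃ v, ℓ v ≠ 0 := by
      by_contra h
      push_neg at h
      exact hℓ0 (LinearMap.ext fun v => h v)
    refine ⟨⟨ofAdd ((a.toAdd.1 * (ℓ v₀)⁻¹) • v₀), ofAdd a.toAdd.2⟩, ?_⟩
    show ofAdd (ℓ ((a.toAdd.1 * (ℓ v₀)⁻¹) • v₀), a.toAdd.2) = a
    rw [map_smul, smul_eq_mul, mul_assoc, inv_mul_cancel₀ hv₀, mul_one]
    exact ofAdd_toAdd a
  constructor
  · -- generation bound
    intro S hS
    have hT : Subgroup.closure (f '' (S : Set K)) = ⊤ := by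
      rw [← MonoidHom.map_closure, hS, ← MonoidHom.range_eq_map]
      exact MonoidHom.range_eq_top_of_surjective f hfs
    classical
    let T : Finset M := S.image (fun x => (f x).toAdd)
    have hcoe : Multiplicative.toAdd '' (f '' (S : Set K)) = (T : Set M) := by
      simp [T, Finset.coe_image, Set.image_image]
    have hspan : Submodule.span (ZMod p) (T : Set M) = ⊤ := by
      rw [Submodule.eq_top_iff']
      intro m
      have hm : ofAdd m ∈ Subgroup.closure (f '' (S : Set K)) := hT ▸ Subgroup.mem_top _
      have hle : Subgroup.closure (f '' (S : Set K)) ≤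
          AddSubgroup.toSubgroup ((Submodule.span (ZMod p) (T : Set M)).toAddSubgroup) := by
        rw [Subgroup.closure_le]
        intro a ha
        show a.toAdd ∈ Submodule.span (ZMod p) (T : Set M)
        apply Submodule.subset_span
        rw [← hcoe]
        exact Set.mem_image_of_mem _ ha
      exact hle hm
    have h4 : Module.finrank (ZMod p) M = 4 := by
      show Module.finrank (ZMod p) (ZMod p × (Fin 3 → ZMod p)) = 4
      rw [Module.finrank_prod, Module.finrank_self, Module.finrank_pi]
      simp
    have hle2 : (T : Set M).finrank (ZMod p) ≤ T.card := finrank_span_finset_le_card T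
    rw [Set.finrank, hspan, finrank_top, h4] at hle2
    exact le_trans hle2 Finset.card_image_le
  · -- Frattini bound
    have hker : frattini K ≤ f.ker := by
      intro x hx
      rw [MonoidHom.mem_ker]
      by_contra hfx
      have hπ : ∃ π : Multiplicative M →* Multiplicative (ZMod p),
          Function.Surjective π ∧ π (f x) ≠ 1 := by
        have ha : (f x).toAdd ≠ 0 := by
          intro h
          exact hfx (by rw [← ofAdd_toAdd (f x), h, ofAdd_zero])
        rcases eq_or_ne (f x).toAdd.1 0 with h1 | h1
        · have h2 : (f x).toAdd.2 ≠ 0 := by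
            intro h2
            exact ha (Prod.ext h1 h2)
          obtain ⟨j, hj⟩ : ∃ j, (f x).toAdd.2 j ≠ 0 := by
            by_contra h
            push_neg at h
            exact h2 (funext h)
          refine ⟨AddMonoidHom.toMultiplicative
            ((Pi.evalAddMonoidHom (fun _ : Fin 3 => ZMod p) j).comp
              (AddMonoidHom.snd (ZMod p) (Fin 3 → ZMod p))), ?_, ?_⟩
          · intro c
            refine ⟨ofAdd (0, Pi.single j c.toAdd), ?_⟩
            have hsingle : Pi.single (M := fun _ : Fin 3 => ZMod p) j (toAdd c) j = toAdd c :=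
              Pi.single_eq_same _ _
            exact (congrArg ofAdd hsingle).trans (ofAdd_toAdd c)
          · exact fun h => hj (congrArg toAdd h)
        · refine ⟨AddMonoidHom.toMultiplicative (AddMonoidHom.fst (ZMod p) (Fin 3 → ZMod p)),
            ?_, ?_⟩
          · intro c
            refine ⟨ofAdd (c.toAdd, 0), ?_⟩
            exact ofAdd_toAdd c
          · exact fun h => h1 (congrArg toAdd h)
      obtain ⟨π, hπs, hπx⟩ := hπ
      have hsurj : Function.Surjective (π.comp f) := hπs.comp hfs
      have hidx : (π.comp f).ker.index = p := by
        rw [Subgroup.index_ker, MonoidHom.range_eq_top_of_surjective _ hsurj]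
        rw [Nat.card_congr Subgroup.topEquiv.toEquiv]
        rw [Nat.card_eq_of_bijective (Multiplicative.toAdd (α := ZMod p)) (Equiv.bijective _)]
        exact Nat.card_zmod p
      have hco := Stmt7Aux.isCoatom_of_index_prime hp hidx
      have hmem := frattini_le_coatom hco hx
      rw [MonoidHom.mem_ker, MonoidHom.comp_apply] at hmem
      exact hπx hmem
    haveI : Finite K := Finite.of_injective (fun x : K => (x.left, x.right))
      (fun x y h => by
        cases x; cases y
        simp only [Prod.mk.injEq] at h
        simp [SemidirectProduct.ext_iff, h.1, h.2])
    let f' := QuotientGroup.lift (frattini K) f (fun x hx => hker hx)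
    have hfs' : Function.Surjective f' := by
      intro a
      obtain ⟨x, hx⟩ := hfs a
      exact ⟨QuotientGroup.mk x, hx⟩
    have hcard := Nat.card_le_card_of_surjective f' hfs'
    have hA : Nat.card (Multiplicative M) = p ^ 4 := by
      rw [Nat.card_eq_of_bijective (Multiplicative.toAdd (α := M)) (Equiv.bijective _),
        hMdef, Nat.card_prod, Nat.card_pi, Nat.card_zmod]
      simp [Nat.card_zmod]
      ring
    rw [hA] at hcard
    exact hcard
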